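/- Let F(x) = exp(f(log x)) where f: ℝ → ℝ is convex, f(x) − x is increasing, and F satisfies the Δ₂-condition. Then F is elastic at infinity: there exist C > 1 and a bounded increasing function w on [1,∞) such that F(tx)/F(t) ≤ C·F(sx)/F(s) + w(t) − w(s) for all 1 ≤ s ≤ t and 0 < x ≤ 1. -/

import Mathlib

open Set

/-- Convexity gives: increments over intervals of fixed length are monotone. -/
lemma convex_increment (f : ℝ → ℝ) (hconv : ConvexOn ℝ Set.univ f)
    {u v h : ℝ} (huv : u ≤ v) (hh : 0 ≤ h) :
    f (u + h) + f v ≤ f u + f (v + h) := by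
  rcases eq_or_lt_of_le hh with rfl | hh
  · simp
  rcases eq_or_lt_of_le huv with rfl | huv
  · ring_nf; rw [add_comm]
  set d := v + h - u with hd
  have hd0 : 0 < d := by simp only [hd]; linarith
  set a : ℝ := h / d with ha
  set b : ℝ := (v - u) / d with hb
  have hab : a + b = 1 := by
    have hne : v + h - u ≠ 0 := by linarith
    rw [ha, hb, hd, ← add_div, div_eq_iff hne]; ring
  have ha0 : 0 ≤ a := div_nonneg hh.le hd0.le
  have hb0 : 0 ≤ b := div_nonneg (by linarith) hd0.le
  have h1 : f (u + h) ≤ b * f u + a * f (v + h) := by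
    have := hconv.2 (mem_univ u) (mem_univ (v + h)) hb0 ha0 (by linarith)
    have e : b • u + a • (v + h) = u + h := by
      have hne : v + h - u ≠ 0 := by linarith
      rw [smul_eq_mul, smul_eq_mul, ha, hb, hd, div_mul_eq_mul_div, div_mul_eq_mul_div,
        ← add_div, div_eq_iff hne]; ring
    rw [e] at this; simpa [smul_eq_mul] using this
  have h2 : f v ≤ a * f u + b * f (v + h) := by
    have := hconv.2 (mem_univ u) (mem_univ (v + h)) ha0 hb0 hab
    have e : a • u + b • (v + h) = v := by
      have hne : v + h - u ≠ 0 := by linarith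
      rw [smul_eq_mul, smul_eq_mul, ha, hb, hd, div_mul_eq_mul_div, div_mul_eq_mul_div,
        ← add_div, div_eq_iff hne]; ring
    rw [e] at this; simpa [smul_eq_mul] using this
  calc f (u + h) + f v ≤ (b * f u + a * f (v + h)) + (a * f u + b * f (v + h)) :=
        add_le_add h1 h2
    _ = (a + b) * (f u + f (v + h)) := by ring
    _ = f u + f (v + h) := by rw [hab, one_mul]

/-- If `F(x) = exp(f(log x))` with `f` convex, `f(x) − x` increasing, and `F`
satisfying the Δ₂-condition, then `F` is elastic at infinity: there are `C > 1`
and a bounded increasing weight `w` on `[1,∞)` with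
`F(tx)/F(t) ≤ C F(sx)/F(s) + w(t) − w(s)` for `1 ≤ s ≤ t`, `0 < x ≤ 1`. -/
theorem elastic_of_exp_convex
    (f : ℝ → ℝ) (hconv : ConvexOn ℝ Set.univ f)
    (hinc : Monotone fun x => f x - x)
    (F : ℝ → ℝ) (hF : ∀ x > (0 : ℝ), F x = Real.exp (f (Real.log x)))
    (hF0 : F 0 = 0)
    (Δ : ℝ) (hΔ : ∀ x ≥ (0 : ℝ), F (2 * x) ≤ Δ * F x) :
    ∃ C > (1 : ℝ), ∃ w : ℝ → ℝ, MonotoneOn w (Ici 1) ∧ BddAbove (w '' Ici 1) ∧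
      ∀ s t x : ℝ, 1 ≤ s → s ≤ t → 0 < x → x ≤ 1 →
        F (t * x) / F t ≤ C * (F (s * x) / F s) + w t - w s := by
  refine ⟨2, by norm_num, fun _ => 0, monotoneOn_const, ⟨0, by rintro y ⟨z, _, rfl⟩; simp⟩,
    fun s t x hs hst hx hx1 => ?_⟩
  have hs0 : (0:ℝ) < s := lt_of_lt_of_le one_pos hs
  have ht0 : (0:ℝ) < t := lt_of_lt_of_le hs0 hst
  have hsx : (0:ℝ) < s * x := mul_pos hs0 hx
  have htx : (0:ℝ) < t * x := mul_pos ht0 hx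
  rw [hF t ht0, hF s hs0, hF _ hsx, hF _ htx, Real.log_mul (ne_of_gt ht0) (ne_of_gt hx),
    Real.log_mul (ne_of_gt hs0) (ne_of_gt hx)]
  rw [← Real.exp_sub, ← Real.exp_sub]
  have hlx : Real.log x ≤ 0 := Real.log_nonpos hx.le hx1
  have key := convex_increment f hconv
    (u := Real.log s + Real.log x) (v := Real.log t + Real.log x) (h := -Real.log x)
    (by have := Real.log_le_log hs0 hst; linarith) (by linarith)
  have key' : f (Real.log t + Real.log x) - f (Real.log t) ≤
      f (Real.log s + Real.log x) - f (Real.log s) := by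
    have e1 : Real.log s + Real.log x + -Real.log x = Real.log s := by ring
    have e2 : Real.log t + Real.log x + -Real.log x = Real.log t := by ring
    rw [e1, e2] at key; linarith
  calc Real.exp (f (Real.log t + Real.log x) - f (Real.log t))
      ≤ Real.exp (f (Real.log s + Real.log x) - f (Real.log s)) := Real.exp_le_exp.mpr key'
    _ ≤ 2 * Real.exp (f (Real.log s + Real.log x) - f (Real.log s)) + 0 - 0 := by
        have := Real.exp_pos (f (Real.log s + Real.log x) - f (Real.log s)); linarith
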